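/- Let n ≥ 2 and let gR and gI be real n×n matrices satisfying the cross-reality condition gR a c · gI d b = gR a d · gI c b for all indices a, b, c, d. If gR is invertible, then gI = 0. (Consequently, by symmetry of the condition, if gI is invertible then gR = 0.) -/
import Mathlib

/-- A rank-one square matrix of size `≥ 2` has zero determinant. -/
lemma rank_one_det_zero (n : ℕ) (hn : 2 ≤ n) (M : Matrix (Fin n) (Fin n) ℝ)
    (u v : Fin n → ℝ) (h : ∀ a c, M a c = u a * v c) : M.det = 0 := by
  rw [← Matrix.exists_mulVec_eq_zero_iff]
  by_cases hv : v = 0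
  · refine ⟨Pi.single ⟨0, by omega⟩ 1, ?_, ?_⟩
    · intro hz
      have := congrFun hz ⟨0, by omega⟩
      simp at this
    · funext a
      simp [Matrix.mulVec, dotProduct, h, hv]
  · obtain ⟨d, hd⟩ : ∃ d, v d ≠ 0 := by
      by_contra hc; push_neg at hc; exact hv (funext hc)
    haveI : Nontrivial (Fin n) := Fin.nontrivial_iff_two_le.mpr hn
    obtain ⟨e, he⟩ : ∃ e : Fin n, e ≠ d := exists_ne d
    refine ⟨fun c => if c = d then v e else if c = e then -v d else 0, ?_, ?_⟩
    · intro hz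
      have := congrFun hz e
      simp [he, hd] at this
    · funext a
      have : ∀ c, M a c * (if c = d then v e else if c = e then -v d else 0)
          = (if c = d then u a * v d * v e else if c = e then -(u a * v e * v d) else 0) := by
        intro c
        rw [h]
        split_ifs <;> subst_vars <;> ring
      simp only [Matrix.mulVec, dotProduct, this]
      have split : ∀ c : Fin n,
          (if c = d then u a * v d * v e else if c = e then -(u a * v e * v d) else 0)
          = (if c = d then u a * v d * v e else 0) + (if c = e then -(u a * v e * v d) else 0) := by
        intro c
        rcases eq_or_ne c d with h1 | h1
        · subst h1; simp [Ne.symm he]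
        · simp [h1]
      simp only [split, Finset.sum_add_distrib, Finset.sum_ite_eq', Finset.mem_univ, if_pos]
      simp; ring

theorem cross_reality_invertible_implies_other_zero
    (n : ℕ) (hn : 2 ≤ n) (gR gI : Matrix (Fin n) (Fin n) ℝ)
    (hcross : ∀ a b c d : Fin n, gR a c * gI d b = gR a d * gI c b) :
    (IsUnit gR.det → gI = 0) ∧ (IsUnit gI.det → gR = 0) := by
  constructor
  · intro hdet
    by_contra hI
    obtain ⟨d, b, hdb⟩ : ∃ d b, gI d b ≠ 0 := by
      by_contra hc; push_neg at hc
      exact hI (by ext d b; simpa using hc d b)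
    have hR : gR.det = 0 := by
      apply rank_one_det_zero n hn gR (fun a => gR a d) (fun c => gI c b / gI d b)
      intro a c
      field_simp
      linear_combination hcross a b c d
    rw [hR] at hdet
    simp at hdet
  · intro hdet
    by_contra hR
    obtain ⟨a, c, hac⟩ : ∃ a c, gR a c ≠ 0 := by
      by_contra hc; push_neg at hc
      exact hR (by ext a c; simpa using hc a c)
    have hI : gI.det = 0 := by
      apply rank_one_det_zero n hn gI (fun d => gR a d / gR a c) (fun b => gI c b)
      intro d b
      field_simp
      linear_combination hcross a b c d
    rw [hI] at hdet
    simp at hdet
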